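/- arXiv:2509.01916 — 2 statements merged into one kernel-verified Lean document; each statement's English description precedes it below -/
import Mathlib

section
/- Let H ∈ ℝ^{p×d} be a matrix of rank p, Ĥ ∈ ℝ^{q×d} a matrix of rank q, and h, ĥ ∈ ℝ^d. Define the affine maps f : ℝ^p → ℝ^d by f(u) = uᵀH + h and g : ℝ^q → ℝ^d by g(v) = vᵀĤ + ĥ. Suppose there exist functions T : ℝ^p → ℝ^q and S : ℝ^q → ℝ^p such that f(u) = g(T(u)) for all u ∈ ℝ^p and g(v) = f(S(v)) for all v ∈ ℝ^q. Then p = q, and there exist an invertible matrix Λ ∈ ℝ^{p×p} and a vector b ∈ ℝ^p such that T(u) = Λu + b for all u ∈ ℝ^p. -/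
lemma vecMul_inj {n d : ℕ} (A : Matrix (Fin n) (Fin d) ℝ) (hA : A.rank = n) :
    Function.Injective (fun u : Fin n → ℝ => Matrix.vecMul u A) := by
  have h1 : A.transpose.rank = n := by rw [Matrix.rank_transpose A]; exact hA
  have h2 : LinearMap.ker A.transpose.mulVecLin = ⊥ := by
    have := LinearMap.finrank_range_add_finrank_ker A.transpose.mulVecLin
    rw [Module.finrank_pi] at this
    have hr : Module.finrank ℝ (LinearMap.range A.transpose.mulVecLin) = n := h1
    rw [hr, Fintype.card_fin] at this
    have : Module.finrank ℝ (LinearMap.ker A.transpose.mulVecLin) = 0 := by omega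
    exact Submodule.finrank_eq_zero.mp this
  have hinj := LinearMap.ker_eq_bot.mp h2
  intro x y hxy
  apply hinj
  simpa [Matrix.mulVecLin_apply, Matrix.mulVec_transpose] using hxy

/-- If two injectively-parameterized affine maps f(u) = uᵀH + h (H of full row
rank p) and g(v) = vᵀĤ + ĥ (Ĥ of full row rank q) have the same image in the
sense that f factors through g via T and g factors through f via S, then p = q
and T is an invertible affine map. -/
theorem affine_reparameterization_of_mutual_factorization
    (p q d : ℕ)
    (H : Matrix (Fin p) (Fin d) ℝ) (hH : H.rank = p)
    (Hhat : Matrix (Fin q) (Fin d) ℝ) (hHhat : Hhat.rank = q)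
    (h hhat : Fin d → ℝ)
    (T : (Fin p → ℝ) → Fin q → ℝ) (S : (Fin q → ℝ) → Fin p → ℝ)
    (hT : ∀ u : Fin p → ℝ, Matrix.vecMul u H + h = Matrix.vecMul (T u) Hhat + hhat)
    (hS : ∀ v : Fin q → ℝ, Matrix.vecMul v Hhat + hhat = Matrix.vecMul (S v) H + h) :
    p = q ∧ ∃ (Λ : Matrix (Fin q) (Fin p) ℝ) (Λinv : Matrix (Fin p) (Fin q) ℝ)
      (b : Fin q → ℝ), Λ * Λinv = 1 ∧ Λinv * Λ = 1 ∧
      ∀ u : Fin p → ℝ, T u = Λ.mulVec u + b := by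
  have injH := vecMul_inj H hH
  have injHhat := vecMul_inj Hhat hHhat
  -- affine shift identities
  have keyT : ∀ u, Matrix.vecMul (T u - T 0) Hhat = Matrix.vecMul u H := by
    intro u
    have e1 : Matrix.vecMul (T u) Hhat = Matrix.vecMul u H + h - hhat := by
      rw [eq_sub_iff_add_eq]; exact (hT u).symm
    have e2 : Matrix.vecMul (T 0) Hhat = h - hhat := by
      have := (hT 0).symm
      rw [Matrix.zero_vecMul, zero_add] at this
      rw [eq_sub_iff_add_eq]; exact this
    rw [Matrix.sub_vecMul, e1, e2]; abel
  have keyS : ∀ v, Matrix.vecMul (S v - S 0) H = Matrix.vecMul v Hhat := by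
    intro v
    have e1 : Matrix.vecMul (S v) H = Matrix.vecMul v Hhat + hhat - h := by
      rw [eq_sub_iff_add_eq]; exact (hS v).symm
    have e2 : Matrix.vecMul (S 0) H = hhat - h := by
      have := hS 0
      rw [Matrix.zero_vecMul, zero_add] at this
      rw [eq_sub_iff_add_eq]; exact this.symm
    rw [Matrix.sub_vecMul, e1, e2]; abel
  -- linear parts
  have Tadd : ∀ u v, T (u + v) - T 0 = (T u - T 0) + (T v - T 0) := by
    intro u v
    apply injHhat
    simp only
    rw [keyT, Matrix.add_vecMul, Matrix.add_vecMul, keyT, keyT]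
  have Tsmul : ∀ (c : ℝ) u, T (c • u) - T 0 = c • (T u - T 0) := by
    intro c u
    apply injHhat
    simp only
    rw [keyT, Matrix.smul_vecMul, Matrix.smul_vecMul, keyT]
  have Sadd : ∀ u v, S (u + v) - S 0 = (S u - S 0) + (S v - S 0) := by
    intro u v
    apply injH
    simp only
    rw [keyS, Matrix.add_vecMul, Matrix.add_vecMul, keyS, keyS]
  have Ssmul : ∀ (c : ℝ) u, S (c • u) - S 0 = c • (S u - S 0) := by
    intro c u
    apply injH
    simp only
    rw [keyS, Matrix.smul_vecMul, Matrix.smul_vecMul, keyS]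
  set L : (Fin p → ℝ) →ₗ[ℝ] (Fin q → ℝ) :=
    { toFun := fun u => T u - T 0, map_add' := Tadd, map_smul' := Tsmul }
  set M : (Fin q → ℝ) →ₗ[ℝ] (Fin p → ℝ) :=
    { toFun := fun v => S v - S 0, map_add' := Sadd, map_smul' := Ssmul }
  -- mutual inverse on the nose
  have ST : ∀ u, S (T u) = u := by
    intro u
    apply injH
    simp only
    have h1 := hT u
    have h2 := hS (T u)
    have : Matrix.vecMul u H + h = Matrix.vecMul (S (T u)) H + h := by
      rw [h1, h2]
    exact (add_right_cancel this).symm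
  have TS : ∀ v, T (S v) = v := by
    intro v
    apply injHhat
    simp only
    have h1 := hS v
    have h2 := hT (S v)
    have : Matrix.vecMul v Hhat + hhat = Matrix.vecMul (T (S v)) Hhat + hhat := by
      rw [h1, h2]
    exact (add_right_cancel this).symm
  have ML : ∀ u, M (L u) = u := by
    intro u
    show S (T u - T 0) - S 0 = u
    apply injH
    simp only
    rw [keyS, keyT]
  have LM : ∀ v, L (M v) = v := by
    intro v
    show T (S v - S 0) - T 0 = v
    apply injHhat
    simp only
    rw [keyT, keyS]
  constructor
  · -- p = q via the linear equivalence L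
    have e : (Fin p → ℝ) ≃ₗ[ℝ] (Fin q → ℝ) :=
      { L with invFun := M, left_inv := ML, right_inv := LM }
    have := e.finrank_eq
    simpa [Module.finrank_pi] using this
  · refine ⟨LinearMap.toMatrix' L, LinearMap.toMatrix' M, T 0, ?_, ?_, ?_⟩
    · apply Matrix.toLin'.injective
      rw [Matrix.toLin'_mul, Matrix.toLin'_one]
      ext v
      simp [Matrix.toLin'_toMatrix', LM]
    · apply Matrix.toLin'.injective
      rw [Matrix.toLin'_mul, Matrix.toLin'_one]
      ext u
      simp [Matrix.toLin'_toMatrix', ML]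
    · intro u
      have : (LinearMap.toMatrix' L).mulVec u = L u := by
        rw [← Matrix.toLin'_apply, Matrix.toLin'_toMatrix']
      rw [this]
      show T u = (T u - T 0) + T 0
      abel
end

section
/- Let ℓ ≥ 1, let A be the (finite) set of multi-indices α ∈ ℕ^p with 1 ≤ |α| ≤ ℓ, let H ∈ ℝ^{A×d} be a matrix whose rows are linearly independent, and let h ∈ ℝ^d. Define the full-row-rank polynomial map f : ℝ^p → ℝ^d by f(u)_j = h_j + ∑_{α∈A} H_{αj} u^α. Then f admits a polynomial left inverse: there exist polynomials G₁,…,G_p in d real variables such that for every u ∈ ℝ^p and every k ∈ {1,…,p}, the evaluation of G_k at f(u) equals u_k. -/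
/-- The set of multi-indices `α ∈ ℕ^p` with `1 ≤ |α| ≤ ℓ`, where `|α|` is the
total degree `∑ k, α k`. (Since `|α| ≤ ℓ` forces `α k ≤ ℓ` for every `k`, this
set is a subset of the finite box `Finset.Icc 0 (fun _ => ℓ)`.) -/
noncomputable def degSet (p ℓ : ℕ) : Finset (Fin p → ℕ) :=
  (Finset.Icc 0 fun _ => ℓ).filter fun α => 1 ≤ ∑ k, α k ∧ ∑ k, α k ≤ ℓ

/-- A full-row-rank polynomial map `f : ℝ^p → ℝ^d`,
`f(u)_j = h_j + ∑_{α ∈ A} H_{αj} u^α` where `A` is the set of multi-indices of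
total degree between 1 and ℓ and the rows of `H` are linearly independent,
admits a polynomial left inverse: there are polynomials `G₁, …, G_p` in `d`
variables with `G_k (f u) = u k` for all `u`. -/
theorem fullRowRank_polynomial_map_exists_polynomial_left_inverse
    (p d ℓ : ℕ) (hℓ : 1 ≤ ℓ)
    (H : (Fin p → ℕ) → Fin d → ℝ) (h : Fin d → ℝ)
    (hH : ∀ c : (Fin p → ℕ) → ℝ,
      (∀ j : Fin d, ∑ α ∈ degSet p ℓ, c α * H α j = 0) →
      ∀ α ∈ degSet p ℓ, c α = 0)
    (f : (Fin p → ℝ) → Fin d → ℝ)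
    (hf : ∀ (u : Fin p → ℝ) (j : Fin d),
      f u j = h j + ∑ α ∈ degSet p ℓ, H α j * ∏ k, u k ^ α k) :
    ∃ G : Fin p → MvPolynomial (Fin d) ℝ,
      ∀ (u : Fin p → ℝ) (k : Fin p), MvPolynomial.eval (f u) (G k) = u k := by
  classical
  set A := degSet p ℓ with hA
  let ι := {α : Fin p → ℕ // α ∈ A}
  let v : ι → (Fin d → ℝ) := fun α => H α.1
  -- linear independence of the rows
  have hli : LinearIndependent ℝ v := by
    rw [Fintype.linearIndependent_iff]
    intro g hg i
    set c : (Fin p → ℕ) → ℝ := fun α => if hα : α ∈ A then g ⟨α, hα⟩ else 0 with hc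
    have hc0 : ∀ α ∈ A, c α = 0 := by
      refine hH c fun j => ?_
      have h0 := congrFun hg j
      simp only [Finset.sum_apply, Pi.smul_apply, smul_eq_mul, Pi.zero_apply] at h0
      calc ∑ α ∈ A, c α * H α j = ∑ α ∈ A.attach, c α.1 * H α.1 j :=
            (Finset.sum_attach A fun α => c α * H α j).symm
        _ = ∑ α : ι, g α * v α j := by
            refine Finset.sum_congr rfl fun α _ => ?_
            simp [hc, α.2, v]
        _ = 0 := h0
    simpa [hc, i.2] using hc0 i.1 i.2
  -- decomposition of f u - h along the rows
  have hdecomp : ∀ u : Fin p → ℝ,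
      (fun j => f u j - h j) = ∑ i : ι, (∏ m, u m ^ i.1 m) • v i := by
    intro u
    funext j
    have hss : ∑ i : ι, (∏ m, u m ^ i.1 m) * H i.1 j
        = ∑ α ∈ A, (∏ m, u m ^ α m) * H α j :=
      Finset.sum_coe_sort A fun α => (∏ m, u m ^ α m) * H α j
    simp only [Finset.sum_apply, Pi.smul_apply, smul_eq_mul, hf, v]
    rw [hss, add_sub_cancel_left]
    exact Finset.sum_congr rfl fun α _ => mul_comm _ _
  -- dual functionals
  have hdual : ∀ k : Fin p, ∃ φ : (Fin d → ℝ) →ₗ[ℝ] ℝ,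
      ∀ u : Fin p → ℝ, φ (fun j => f u j - h j) = u k := by
    intro k
    have ekm : (fun m => if m = k then 1 else 0) ∈ A := by
      rw [hA, degSet, Finset.mem_filter, Finset.mem_Icc]
      refine ⟨⟨fun m => Nat.zero_le _, fun m => ?_⟩, ?_, ?_⟩
      · by_cases hm : m = k <;> simp [hm, hℓ]
      · simp
      · simp [hℓ]
    set iK : ι := ⟨fun m => if m = k then 1 else 0, ekm⟩ with hiK
    obtain ⟨φ, hφ⟩ := LinearMap.exists_extend
      ((Finsupp.lapply iK : (ι →₀ ℝ) →ₗ[ℝ] ℝ).comp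
        (hli.repr : _ →ₗ[ℝ] (ι →₀ ℝ)))
    have hφv : ∀ i : ι, φ (v i) = if i = iK then 1 else 0 := by
      intro i
      have hmem : v i ∈ Submodule.span ℝ (Set.range v) :=
        Submodule.subset_span ⟨i, rfl⟩
      have h1 : φ (v i) = (hli.repr ⟨v i, hmem⟩) iK := by
        have := congrFun (congrArg DFunLike.coe hφ) ⟨v i, hmem⟩
        simpa using this
      rw [h1, hli.repr_eq_single i ⟨v i, hmem⟩ rfl, Finsupp.single_apply]
    refine ⟨φ, fun u => ?_⟩
    rw [hdecomp u, map_sum]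
    have : ∀ i : ι, φ ((∏ m, u m ^ i.1 m) • v i)
        = if i = iK then ∏ m, u m ^ i.1 m else 0 := by
      intro i
      rw [map_smul, hφv i, smul_eq_mul]
      by_cases hi : i = iK <;> simp [hi]
    rw [Finset.sum_congr rfl fun i _ => this i, Finset.sum_ite_eq' _ iK]
    simp only [Finset.mem_univ, if_true, hiK]
    refine Finset.prod_eq_single k (fun m _ hm => by simp [hm]) (by simp) |>.trans (by simp)
  choose φ hφ using hdual
  refine ⟨fun k => ∑ j, MvPolynomial.C (φ k (Pi.single j 1)) *
      (MvPolynomial.X j - MvPolynomial.C (h j)), fun u k => ?_⟩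
  have heval : MvPolynomial.eval (f u) (∑ j, MvPolynomial.C (φ k (Pi.single j 1)) *
      (MvPolynomial.X j - MvPolynomial.C (h j)))
      = ∑ j, φ k (Pi.single j 1) * (f u j - h j) := by
    simp
  rw [heval]
  have hrep : (fun j => f u j - h j) = ∑ j, (f u j - h j) • (Pi.single j 1 : Fin d → ℝ) := by
    funext j'
    simp [Finset.sum_apply, Pi.single_apply]
  calc ∑ j, φ k (Pi.single j 1) * (f u j - h j)
      = φ k (fun j => f u j - h j) := by
        rw [hrep, map_sum]
        exact Finset.sum_congr rfl fun j _ => by rw [map_smul, smul_eq_mul, mul_comm]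
    _ = u k := hφ k u
end
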